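/- Let G be a connected locally finite graph with edge set E, let e ∈ E, and let λ, λ' : E → [0,1] be injective labellings that agree on every edge other than e. If e ∉ F_F(λ) and λ'(e) < Z_λ(e), then F_F(λ') = (F_F(λ) ∪ {e}) ∖ {φ(e,λ)}. -/

import Mathlib

namespace MSF

variable {V : Type*}

/-- The free minimal spanning forest of an (injective) labelling: the set of edges `e` such
that there is no finite cycle of `G` containing `e` on which `lab e` is the maximal label. -/
def setFF (G : SimpleGraph V) (lab : G.edgeSet → ℝ) : Set G.edgeSet :=
  {e | ¬ ∃ (v : V) (c : G.Walk v v), c.IsCycle ∧ (e : Sym2 V) ∈ c.edges ∧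
    ∀ e' : G.edgeSet, (e' : Sym2 V) ∈ c.edges → lab e' ≤ lab e}

/-- `Z_lab(e)`: the infimum, over finite cycles `C` of `G` containing `e`, of the maximal
label on `C \ {e}` (equal to `∞` if no finite cycle contains `e`). -/
noncomputable def Z (G : SimpleGraph V) (lab : G.edgeSet → ℝ) (e : G.edgeSet) : ENNReal :=
  ⨅ (v : V) (c : {c : G.Walk v v // c.IsCycle ∧ (e : Sym2 V) ∈ c.edges}),
    sSup {x : ENNReal | ∃ e' : G.edgeSet,
      (e' : Sym2 V) ∈ (c : G.Walk v v).edges ∧ e' ≠ e ∧ x = ENNReal.ofReal (lab e')}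

/-- `f` attains the infimum in the definition of `Z_lab(e)`: `f ≠ e` lies on a finite cycle
through `e` on which it has the maximal label among the edges `≠ e`, and this label equals
`Z_lab(e)`. -/
def Attains (G : SimpleGraph V) (lab : G.edgeSet → ℝ) (e f : G.edgeSet) : Prop :=
  f ≠ e ∧ ENNReal.ofReal (lab f) = Z G lab e ∧
    ∃ (v : V) (c : G.Walk v v), c.IsCycle ∧ (e : Sym2 V) ∈ c.edges ∧
      (f : Sym2 V) ∈ c.edges ∧
      ∀ e' : G.edgeSet, (e' : Sym2 V) ∈ c.edges → e' ≠ e → lab e' ≤ lab f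

/-- `φ(e,lab)`: the edge attaining the infimum in `Z_lab(e)` if it exists, `∅` otherwise. -/
noncomputable def phi (G : SimpleGraph V) (lab : G.edgeSet → ℝ) (e : G.edgeSet) :
    Option G.edgeSet := by
  classical exact if h : ∃ f, Attains G lab e f then some h.choose else none

open SimpleGraph

section Aux
variable {G : SimpleGraph V}

lemma sym2_rep (z : Sym2 V) : ∃ x y, z = s(x, y) :=
  z.ind fun x y => ⟨x, y, rfl⟩

lemma exists_append_cons_of_mem_darts {u v : V} {p : G.Walk u v} {d : G.Dart}
    (hd : d ∈ p.darts) :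
    ∃ (q : G.Walk u d.fst) (r : G.Walk d.snd v), p = q.append (Walk.cons d.adj r) := by
  induction p with
  | nil => simp at hd
  | cons h p ih =>
    rw [Walk.darts_cons, List.mem_cons] at hd
    rcases hd with rfl | hd
    · exact ⟨Walk.nil, p, rfl⟩
    · obtain ⟨q, r, rfl⟩ := ih hd
      exact ⟨Walk.cons h q, r, by rw [Walk.cons_append]⟩

lemma cycle_cons_of_dart_fst {x : V} {c : G.Walk x x} (hc : c.IsCycle) {d : G.Dart}
    (hd : d ∈ c.darts) (hfst : d.fst = x) :
    ∃ p : G.Walk d.snd x, p.IsPath ∧ c.edges = d.edge :: p.edges := by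
  cases c with
  | nil => simp at hd
  | cons h q =>
    rw [Walk.darts_cons, List.mem_cons] at hd
    rcases hd with rfl | hd
    · exact ⟨q, ((Walk.cons_isCycle_iff q h).mp hc).1, by simp⟩
    · exfalso
      have hq : q.IsPath := ((Walk.cons_isCycle_iff q h).mp hc).1
      have hmem : x ∈ q.support.dropLast := by
        have : d.fst ∈ q.support.dropLast := by
          rw [← Walk.map_fst_darts]
          exact List.mem_map_of_mem hd
        rwa [hfst] at this
      have hnd : q.support.Nodup := hq.support_nodup
      have hne : q.support ≠ [] := q.support_ne_nil
      have hsp := List.dropLast_append_getLast hne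
      rw [q.getLast_support] at hsp
      rw [← hsp] at hnd
      exact (List.disjoint_of_nodup_append hnd) hmem (List.mem_singleton_self x)

lemma cycle_split {u x y : V} {c : G.Walk u u} (hc : c.IsCycle) (he : s(x, y) ∈ c.edges) :
    ∃ p : G.Walk y x, p.IsPath ∧ c.edges.Perm (s(x, y) :: p.edges) := by
  classical
  obtain ⟨d, hd, hde⟩ := List.mem_map.mp he
  have hx : d.fst ∈ c.support := Walk.dart_fst_mem_support_of_mem_darts _ hd
  have hc' := hc.rotate hx
  have hd' : d ∈ (c.rotate _ hx).darts := (c.rotate_darts _ hx).mem_iff.mpr hd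
  obtain ⟨p, hp, hpe⟩ := cycle_cons_of_dart_fst hc' hd' rfl
  have hperm : c.edges.Perm (d.edge :: p.edges) := by
    rw [← hpe]
    exact (c.rotate_edges _ hx).perm.symm
  have hde' : s(d.fst, d.snd) = s(x, y) := hde
  rcases Sym2.eq_iff.mp hde' with ⟨h1, h2⟩ | ⟨h1, h2⟩
  · subst h1; subst h2
    exact ⟨p, hp, hde ▸ hperm⟩
  · subst h1; subst h2
    refine ⟨p.reverse, hp.reverse, ?_⟩
    refine (hde ▸ hperm).trans (List.Perm.cons _ ?_)
    rw [Walk.edges_reverse]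
    exact (List.reverse_perm _).symm



lemma splice {u₁ u₂ : V} {c₁ : G.Walk u₁ u₁} {c₂ : G.Walk u₂ u₂}
    (h₁ : c₁.IsCycle) (h₂ : c₂.IsCycle) {ee gg : Sym2 V}
    (he₁ : ee ∈ c₁.edges) (he₂ : ee ∈ c₂.edges)
    (hg₁ : gg ∈ c₁.edges) (hgg : gg ≠ ee) (hg₂ : gg ∉ c₂.edges) :
    ∃ (w : V) (c : G.Walk w w), c.IsCycle ∧ gg ∈ c.edges ∧
      ∀ f ∈ c.edges, f = gg ∨ ((f ∈ c₁.edges ∨ f ∈ c₂.edges) ∧ f ≠ ee) := by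
  classical
  obtain ⟨x, y, rfl⟩ := sym2_rep ee
  obtain ⟨p₁, hp₁, hperm₁⟩ := cycle_split h₁ he₁
  obtain ⟨p₂, hp₂, hperm₂⟩ := cycle_split h₂ he₂
  have hnd₁ : (s(x, y) :: p₁.edges).Nodup :=
    hperm₁.nodup_iff.mp h₁.isTrail.edges_nodup
  have hnd₂ : (s(x, y) :: p₂.edges).Nodup :=
    hperm₂.nodup_iff.mp h₂.isTrail.edges_nodup
  have hee₁ : s(x, y) ∉ p₁.edges := (List.nodup_cons.mp hnd₁).1
  have hee₂ : s(x, y) ∉ p₂.edges := (List.nodup_cons.mp hnd₂).1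
  have hgp₁ : gg ∈ p₁.edges := by
    rcases List.mem_cons.mp (hperm₁.mem_iff.mp hg₁) with h | h
    · exact absurd h hgg
    · exact h
  have hgp₂ : gg ∉ p₂.edges := fun h => hg₂ (hperm₂.mem_iff.mpr (List.mem_cons_of_mem _ h))
  obtain ⟨d, hd, hde⟩ := List.mem_map.mp hgp₁
  obtain ⟨q, r, rfl⟩ := exists_append_cons_of_mem_darts hd
  have hedges : (q.append (Walk.cons d.adj r)).edges = q.edges ++ d.edge :: r.edges := by
    simp [Walk.edges_append, SimpleGraph.Dart.edge]
  have hndp : (q.edges ++ gg :: r.edges).Nodup := by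
    rw [← hde, ← hedges]; exact hp₁.isTrail.edges_nodup
  have hgq : gg ∉ q.edges := fun h =>
    (List.disjoint_of_nodup_append hndp) h List.mem_cons_self
  have hgr : gg ∉ r.edges :=
    (List.nodup_cons.mp (List.nodup_append'.mp hndp).2.1).1
  set w0 : G.Walk d.snd d.fst := r.append (p₂.reverse.append q) with hw0def
  set t := w0.bypass with htdef
  have ht : t.IsPath := Walk.bypass_isPath _
  have hsub : t.edges ⊆ w0.edges := Walk.edges_bypass_subset _
  have hw0 : ∀ f ∈ w0.edges, f ∈ r.edges ∨ f ∈ p₂.edges ∨ f ∈ q.edges := by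
    intro f hf
    rw [hw0def, Walk.edges_append, Walk.edges_append, Walk.edges_reverse] at hf
    rcases List.mem_append.mp hf with h | h
    · exact Or.inl h
    rcases List.mem_append.mp h with h | h
    · exact Or.inr (Or.inl (List.mem_reverse.mp h))
    · exact Or.inr (Or.inr h)
  have hgt : gg ∉ t.edges := by
    intro h
    rcases hw0 _ (hsub h) with h | h | h
    · exact hgr h
    · exact hgp₂ h
    · exact hgq h
  have hdcast : s(d.fst, d.snd) = gg := hde
  have hcyc : (Walk.cons d.adj t).IsCycle :=
    (Walk.cons_isCycle_iff t d.adj).mpr ⟨ht, by rwa [hdcast]⟩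
  refine ⟨d.fst, Walk.cons d.adj t, hcyc, ?_, ?_⟩
  · rw [Walk.edges_cons, hdcast]; exact List.mem_cons_self
  · intro f hf
    rw [Walk.edges_cons] at hf
    rcases List.mem_cons.mp hf with rfl | hf
    · exact Or.inl hdcast
    right
    have hinp₁ : ∀ f', f' ∈ r.edges ∨ f' ∈ q.edges →
        f' ∈ (q.append (Walk.cons d.adj r)).edges := by
      intro f' hf'
      rw [hedges]
      rcases hf' with h | h
      · exact List.mem_append.mpr (Or.inr (List.mem_cons_of_mem _ h))
      · exact List.mem_append.mpr (Or.inl h)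
    rcases hw0 _ (hsub hf) with h | h | h
    · refine ⟨Or.inl (hperm₁.mem_iff.mpr (List.mem_cons_of_mem _ (hinp₁ f (Or.inl h)))), ?_⟩
      rintro rfl
      exact hee₁ (hinp₁ _ (Or.inl h))
    · refine ⟨Or.inr (hperm₂.mem_iff.mpr (List.mem_cons_of_mem _ h)), ?_⟩
      rintro rfl
      exact hee₂ h
    · refine ⟨Or.inl (hperm₁.mem_iff.mpr (List.mem_cons_of_mem _ (hinp₁ f (Or.inr h)))), ?_⟩
      rintro rfl
      exact hee₁ (hinp₁ _ (Or.inr h))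

end Aux

lemma Z_le_sSup (G : SimpleGraph V) (lab : G.edgeSet → ℝ) (e : G.edgeSet) {v : V}
    {c : G.Walk v v} (hc : c.IsCycle) (hce : (e : Sym2 V) ∈ c.edges) :
    Z G lab e ≤ sSup {x : ENNReal | ∃ e' : G.edgeSet,
      (e' : Sym2 V) ∈ c.edges ∧ e' ≠ e ∧ x = ENNReal.ofReal (lab e')} := by
  rw [Z]
  exact iInf_le_of_le v (iInf_le_of_le
    (⟨c, hc, hce⟩ : {c : G.Walk v v // c.IsCycle ∧ (e : Sym2 V) ∈ c.edges}) le_rfl)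

lemma exists_cycle_of_Z_lt {G : SimpleGraph V} {lab : G.edgeSet → ℝ} {e : G.edgeSet}
    {x : ENNReal} (h : Z G lab e < x) :
    ∃ (v : V) (c : G.Walk v v), c.IsCycle ∧ (e : Sym2 V) ∈ c.edges ∧
      ∀ f : G.edgeSet, (f : Sym2 V) ∈ c.edges → f ≠ e → ENNReal.ofReal (lab f) < x := by
  rw [Z] at h
  obtain ⟨v, hv⟩ := iInf_lt_iff.mp h
  obtain ⟨⟨c, hc, hce⟩, h2⟩ := iInf_lt_iff.mp hv
  refine ⟨v, c, hc, hce, fun f hf hfe => lt_of_le_of_lt (le_sSup ?_) h2⟩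
  exact ⟨f, hf, hfe, rfl⟩

/-- If `e ∉ F_F(lab)` and `lab' e < Z_lab(e)` then
`F_F(lab') = (F_F(lab) ∪ {e}) \ {φ(e,lab)}`. -/
theorem setFF_eq_of_not_mem_of_lt
    {V : Type*} (G : SimpleGraph V) (hconn : G.Connected)
    (hlf : ∀ v : V, (G.neighborSet v).Finite)
    (e : G.edgeSet) (lab lab' : G.edgeSet → ℝ)
    (hinj : Function.Injective lab) (hinj' : Function.Injective lab')
    (hrange : ∀ e' : G.edgeSet, lab e' ∈ Set.Icc (0 : ℝ) 1)
    (hrange' : ∀ e' : G.edgeSet, lab' e' ∈ Set.Icc (0 : ℝ) 1)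
    (hagree : ∀ e' : G.edgeSet, e' ≠ e → lab' e' = lab e')
    (hmem : e ∉ setFF G lab) (hlt : ENNReal.ofReal (lab' e) < Z G lab e) :
    setFF G lab' = (setFF G lab ∪ {e}) \ {f | phi G lab e = some f} := by
  classical
  have hnn : ∀ f, 0 ≤ lab f := fun f => (hrange f).1
  have hattains_unique : ∀ f f', Attains G lab e f → Attains G lab e f' → f = f' := by
    rintro f f' ⟨-, hf, -⟩ ⟨-, hf', -⟩
    exact hinj ((ENNReal.ofReal_eq_ofReal_iff (hnn f) (hnn f')).mp (hf.trans hf'.symm))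
  have hphi_some : ∀ f, Attains G lab e f → phi G lab e = some f := by
    intro f hf
    unfold phi
    rw [dif_pos ⟨f, hf⟩]
    exact congrArg some (hattains_unique _ _ (Exists.choose_spec _) hf)
  have hphi_attains : ∀ f, phi G lab e = some f → Attains G lab e f := by
    intro f hf
    by_cases h : ∃ f', Attains G lab e f'
    · unfold phi at hf
      rw [dif_pos h] at hf
      exact Option.some_inj.mp hf ▸ h.choose_spec
    · unfold phi at hf
      rw [dif_neg h] at hf
      exact absurd hf (by simp)
  have heFF' : e ∈ setFF G lab' := by
    simp only [setFF, Set.mem_setOf_eq]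
    rintro ⟨v, c, hc, hce, hmax⟩
    have h1 : Z G lab e ≤ ENNReal.ofReal (lab' e) := by
      refine le_trans (Z_le_sSup G lab e hc hce) (sSup_le ?_)
      rintro x ⟨f, hf, hfe, rfl⟩
      exact ENNReal.ofReal_le_ofReal (by rw [← hagree f hfe]; exact hmax f hf)
    exact absurd hlt (not_lt.mpr h1)
  have key : ∀ (g : G.edgeSet), g ≠ e → phi G lab e ≠ some g →
      ∀ (v : V) (c : G.Walk v v), c.IsCycle → (g : Sym2 V) ∈ c.edges →
      (e : Sym2 V) ∈ c.edges →
      (∀ f : G.edgeSet, (f : Sym2 V) ∈ c.edges → f ≠ e → lab f ≤ lab g) →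
      ∃ (w : V) (c₃ : G.Walk w w), c₃.IsCycle ∧ (g : Sym2 V) ∈ c₃.edges ∧
        ∀ f : G.edgeSet, (f : Sym2 V) ∈ c₃.edges → f ≠ g → f ≠ e ∧ lab f ≤ lab g := by
    intro g hge hphig v c hc hgc hec hmax
    have hZle : Z G lab e ≤ ENNReal.ofReal (lab g) := by
      refine le_trans (Z_le_sSup G lab e hc hec) (sSup_le ?_)
      rintro x ⟨f, hf, hfe, rfl⟩
      exact ENNReal.ofReal_le_ofReal (hmax f hf hfe)
    have hZlt : Z G lab e < ENNReal.ofReal (lab g) := by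
      rcases lt_or_eq_of_le hZle with h | h
      · exact h
      · exact absurd (hphi_some g ⟨hge, h.symm, v, c, hc, hec, hgc, hmax⟩) hphig
    obtain ⟨v₂, c₂, hc₂, hec₂, hlt₂⟩ := exists_cycle_of_Z_lt hZlt
    have hlab₂ : ∀ f : G.edgeSet, (f : Sym2 V) ∈ c₂.edges → f ≠ e → lab f < lab g :=
      fun f hf hfe => (ENNReal.ofReal_lt_ofReal_iff_of_nonneg (hnn f)).mp (hlt₂ f hf hfe)
    have hgc₂ : (g : Sym2 V) ∉ c₂.edges := fun h => lt_irrefl _ (hlab₂ g h hge)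
    obtain ⟨w, c₃, hc₃, hgc₃, hmem₃⟩ :=
      splice hc hc₂ hec hec₂ hgc (fun h => hge (Subtype.ext h)) hgc₂
    refine ⟨w, c₃, hc₃, hgc₃, ?_⟩
    intro f hf hfg
    rcases hmem₃ _ hf with h | ⟨h, hne⟩
    · exact absurd (Subtype.ext h) hfg
    · have hfe : f ≠ e := fun hh => hne (by rw [hh])
      refine ⟨hfe, ?_⟩
      rcases h with h | h
      · exact hmax f h hfe
      · exact (hlab₂ f h hfe).le
  ext g
  simp only [Set.mem_diff, Set.mem_union, Set.mem_singleton_iff, Set.mem_setOf_eq]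
  by_cases hge : g = e
  · subst hge
    constructor
    · intro _
      exact ⟨Or.inr rfl, fun hph => (hphi_attains _ hph).1 rfl⟩
    · intro _
      exact heFF'
  · by_cases hphig : phi G lab e = some g
    · obtain ⟨hne, hZg, v, c, hc, hec, hgc, hmaxg⟩ := hphi_attains _ hphig
      constructor
      · intro hgFF'
        exfalso
        have hpos : 0 < lab g := by
          by_contra hle
          push_neg at hle
          rw [← hZg, ENNReal.ofReal_eq_zero.mpr hle] at hlt
          exact (ENNReal.not_lt_zero hlt)
        have helt : lab' e < lab g := by
          have h := hlt
          rw [← hZg] at h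
          exact (ENNReal.ofReal_lt_ofReal_iff hpos).mp h
        refine hgFF' ⟨v, c, hc, hgc, ?_⟩
        intro f hf
        rw [hagree g hge]
        by_cases hfe : f = e
        · subst hfe; exact helt.le
        · rw [hagree f hfe]; exact hmaxg f hf hfe
      · rintro ⟨-, h2⟩
        exact absurd hphig h2
    · constructor
      · intro hgFF'
        refine ⟨Or.inl ?_, hphig⟩
        simp only [setFF, Set.mem_setOf_eq]
        rintro ⟨v, c, hc, hgc, hmax⟩
        by_cases hec : (e : Sym2 V) ∈ c.edges
        · obtain ⟨w, c₃, hc₃, hgc₃, h₃⟩ :=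
            key g hge hphig v c hc hgc hec (fun f hf _ => hmax f hf)
          refine hgFF' ⟨w, c₃, hc₃, hgc₃, ?_⟩
          intro f hf
          by_cases hfg : f = g
          · subst hfg; exact le_refl _
          · obtain ⟨hfe, hle⟩ := h₃ f hf hfg
            rw [hagree f hfe, hagree g hge]
            exact hle
        · refine hgFF' ⟨v, c, hc, hgc, ?_⟩
          intro f hf
          have hfe : f ≠ e := fun hh => hec (by rw [← hh]; exact hf)
          rw [hagree f hfe, hagree g hge]
          exact hmax f hf
      · rintro ⟨h1 | h1, -⟩
        swap
        · exact absurd h1 hge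
        simp only [setFF, Set.mem_setOf_eq] at h1 ⊢
        rintro ⟨v, c, hc, hgc, hmax⟩
        by_cases hec : (e : Sym2 V) ∈ c.edges
        · have hmaxlab : ∀ f : G.edgeSet, (f : Sym2 V) ∈ c.edges → f ≠ e → lab f ≤ lab g := by
            intro f hf hfe
            rw [← hagree f hfe, ← hagree g hge]
            exact hmax f hf
          obtain ⟨w, c₃, hc₃, hgc₃, h₃⟩ := key g hge hphig v c hc hgc hec hmaxlab
          refine h1 ⟨w, c₃, hc₃, hgc₃, ?_⟩
          intro f hf
          by_cases hfg : f = g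
          · subst hfg; exact le_refl _
          · exact (h₃ f hf hfg).2
        · refine h1 ⟨v, c, hc, hgc, ?_⟩
          intro f hf
          have hfe : f ≠ e := fun hh => hec (by rw [← hh]; exact hf)
          rw [← hagree f hfe, ← hagree g hge]
          exact hmax f hf

end MSF
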